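/- Let G be an abelian group, K a Hausdorff topological abelian group, ρ : G → K a group homomorphism, and E ⊆ G a set with ρ(E) dense in K. Let U ⊆ K be open. Then for every finite set V ⊆ K there is a family (g_v)_{v ∈ V} of elements of E such that whenever v, v' ∈ V satisfy v − v' ∈ U, we have g_v − g_{v'} ∈ ρ⁻¹(U) ∩ (E−E). Consequently, if the Cayley graph Cay(U) on K has a finite subgraph with chromatic number at least k, then the Cayley graph Cay(ρ⁻¹(U) ∩ (E−E)) on G has chromatic number at least k. -/

import Mathlib

open Pointwise

/-- The Cayley graph of `S ⊆ Γ`: vertices are the elements of `Γ`, with `x, y`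
adjacent iff `x - y ∈ S` or `y - x ∈ S`. -/
def cayleyGraph {Γ : Type*} [AddCommGroup Γ] (S : Set Γ) : SimpleGraph Γ :=
  SimpleGraph.fromRel (fun x y => x - y ∈ S)

open Filter Topology in
lemma exists_nhds_zero_sub_aux {K : Type*} [AddCommGroup K] [TopologicalSpace K]
    [IsTopologicalAddGroup K] {S : Set K} (hS : S ∈ 𝓝 (0 : K)) :
    ∃ W ∈ 𝓝 (0 : K), ∀ a ∈ W, ∀ b ∈ W, a - b ∈ S := by
  have h : Filter.Tendsto (fun p : K × K => p.1 - p.2) (𝓝 0 ×ˢ 𝓝 0) (𝓝 0) := by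
    rw [← nhds_prod_eq]
    simpa using (continuous_sub.tendsto ((0 : K), (0 : K)))
  have h2 := Filter.mem_map.mp (h hS)
  obtain ⟨W1, hW1, W2, hW2, hsub⟩ := Filter.mem_prod_iff.mp h2
  refine ⟨W1 ∩ W2, Filter.inter_mem hW1 hW2, fun a ha b hb => ?_⟩
  exact hsub (Set.mk_mem_prod ha.1 hb.2)

open Filter Topology in
/-- Key construction: a family `g` indexed by `K`, injective on `V` and
reproducing the `U`-differences. -/
lemma copy_cayley_key {G K : Type*} [AddCommGroup G] [AddCommGroup K]
    [TopologicalSpace K] [IsTopologicalAddGroup K] [T2Space K]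
    (ρ : G →+ K) (E : Set G) (hE : Dense (⇑ρ '' E)) (U : Set K) (hU : IsOpen U)
    (V : Set K) (hV : V.Finite) :
    ∃ g : K → G, (∀ v ∈ V, g v ∈ E) ∧ (∀ v ∈ V, ∀ v' ∈ V, v ≠ v' → g v ≠ g v') ∧
      ∀ v ∈ V, ∀ v' ∈ V, v - v' ∈ U → g v - g v' ∈ ⇑ρ ⁻¹' U ∩ (E - E) := by
  classical
  -- for each pair, a good set S_p ∈ 𝓝 0
  have hSp : ∀ p : K × K, {x : K | (p.1 - p.2 ∈ U → p.1 - p.2 + x ∈ U) ∧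
      (p.1 ≠ p.2 → p.1 - p.2 + x ≠ 0)} ∈ 𝓝 (0 : K) := by
    intro p
    have h1 : {x : K | p.1 - p.2 ∈ U → p.1 - p.2 + x ∈ U} ∈ 𝓝 (0 : K) := by
      by_cases h : p.1 - p.2 ∈ U
      · have hc : Continuous fun x : K => p.1 - p.2 + x := continuous_const.add continuous_id
        have hmem : U ∈ 𝓝 (p.1 - p.2) := hU.mem_nhds h
        have htd : Filter.Tendsto (fun x : K => p.1 - p.2 + x) (𝓝 0) (𝓝 (p.1 - p.2)) := by
          simpa [ContinuousAt] using hc.continuousAt (x := (0 : K))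
        filter_upwards [htd hmem] with x hx _
        exact hx
      · filter_upwards with x hx
        exact absurd hx h
    have h2 : {x : K | p.1 ≠ p.2 → p.1 - p.2 + x ≠ 0} ∈ 𝓝 (0 : K) := by
      by_cases h : p.1 = p.2
      · filter_upwards with x hx
        exact absurd h hx
      · have hne : p.1 - p.2 ≠ 0 := sub_ne_zero.mpr h
        have hc : Continuous fun x : K => p.1 - p.2 + x := continuous_const.add continuous_id
        have hmem : ({0}ᶜ : Set K) ∈ 𝓝 (p.1 - p.2) :=
          (isOpen_compl_singleton).mem_nhds (by simpa using hne)
        have htd : Filter.Tendsto (fun x : K => p.1 - p.2 + x) (𝓝 0) (𝓝 (p.1 - p.2)) := by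
          simpa [ContinuousAt] using hc.continuousAt (x := (0 : K))
        filter_upwards [htd hmem] with x hx _
        exact hx
    exact Filter.inter_mem h1 h2
  -- pick W_p with W_p - W_p ⊆ S_p
  choose Wp hWp hWpsub using fun p : K × K => exists_nhds_zero_sub_aux (hSp p)
  -- intersect over finite set of pairs
  have hpairs : (V ×ˢ V).Finite := hV.prod hV
  have hW : (⋂ p ∈ V ×ˢ V, Wp p) ∈ 𝓝 (0 : K) :=
    (Filter.biInter_mem hpairs).mpr fun p _ => hWp p
  set W : Set K := ⋂ p ∈ V ×ˢ V, Wp p with hWdef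
  set O : Set K := interior W with hOdef
  have hOopen : IsOpen O := isOpen_interior
  have hO0 : (0 : K) ∈ O := mem_interior_iff_mem_nhds.mpr hW
  -- density gives, for each v, some e ∈ E with ρ e - v ∈ O
  have hex : ∀ v : K, ∃ e : G, e ∈ E ∧ ρ e - v ∈ O := by
    intro v
    have hopen : IsOpen {x : K | x - v ∈ O} := hOopen.preimage (continuous_sub_right v)
    have hne : {x : K | x - v ∈ O}.Nonempty := ⟨v, by simpa using hO0⟩
    obtain ⟨y, hy, hyO⟩ := hE.exists_mem_open hopen hne
    obtain ⟨e, he, rfl⟩ := hy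
    exact ⟨e, he, hyO⟩
  choose g hgE hgO using hex
  have key : ∀ v ∈ V, ∀ v' ∈ V,
      (v - v' ∈ U → ρ (g v) - ρ (g v') ∈ U) ∧ (v ≠ v' → ρ (g v) ≠ ρ (g v')) := by
    intro v hv v' hv'
    have hmem : (v, v') ∈ V ×ˢ V := Set.mk_mem_prod hv hv'
    have ha : ρ (g v) - v ∈ Wp (v, v') := by
      have := interior_subset (hgO v)
      exact Set.mem_iInter₂.mp this (v, v') hmem
    have hb : ρ (g v') - v' ∈ Wp (v, v') := by
      have := interior_subset (hgO v')
      exact Set.mem_iInter₂.mp this (v, v') hmem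
    have hS := hWpsub (v, v') _ ha _ hb
    have heq : ρ (g v) - ρ (g v') = v - v' + ((ρ (g v) - v) - (ρ (g v') - v')) := by
      abel
    constructor
    · intro hUU
      rw [heq]
      exact hS.1 hUU
    · intro hne
      have := hS.2 hne
      intro hcontra
      apply this
      rw [← heq, hcontra, sub_self]
  refine ⟨g, fun v _ => hgE v, ?_, ?_⟩
  · intro v hv v' hv' hne hcontra
    exact (key v hv v' hv').2 hne (by rw [hcontra])
  · intro v hv v' hv' hUU
    refine ⟨?_, Set.sub_mem_sub (hgE v) (hgE v')⟩
    have := (key v hv v' hv').1 hUU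
    simpa [Set.mem_preimage, map_sub] using this

/-- Lifting chromatic recurrence through a homomorphism with dense image on `E`:
for every finite `V ⊆ K` there is a family `(g_v)_{v ∈ V}` in `E` with
`v - v' ∈ U → g_v - g_{v'} ∈ ρ⁻¹(U) ∩ (E - E)`; consequently, if `Cay(U)` has a
finite subgraph with chromatic number at least `k`, then so does
`Cay(ρ⁻¹(U) ∩ (E - E))`. -/
theorem copy_cayley {G K : Type*} [AddCommGroup G] [AddCommGroup K]
    [TopologicalSpace K] [IsTopologicalAddGroup K] [T2Space K]
    (ρ : G →+ K) (E : Set G) (hE : Dense (⇑ρ '' E)) (U : Set K) (hU : IsOpen U) :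
    (∀ V : Set K, V.Finite → ∃ g : K → G, (∀ v ∈ V, g v ∈ E) ∧
      ∀ v ∈ V, ∀ v' ∈ V, v - v' ∈ U → g v - g v' ∈ ⇑ρ ⁻¹' U ∩ (E - E)) ∧
    (∀ k : ℕ,
      (∃ (n : ℕ) (H : SimpleGraph (Fin n)) (f : H →g cayleyGraph U),
        Function.Injective ⇑f ∧ (k : ℕ∞) ≤ H.chromaticNumber) →
      (k : ℕ∞) ≤ (cayleyGraph (⇑ρ ⁻¹' U ∩ (E - E))).chromaticNumber) := by
  constructor
  · intro V hV
    obtain ⟨g, hg1, _, hg3⟩ := copy_cayley_key ρ E hE U hU V hV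
    exact ⟨g, hg1, hg3⟩
  · rintro k ⟨n, H, f, hfinj, hk⟩
    obtain ⟨g, hg1, hg2, hg3⟩ := copy_cayley_key ρ E hE U hU (Set.range ⇑f)
      (Set.finite_range ⇑f)
    have hhom : ∀ a b : Fin n, H.Adj a b →
        (cayleyGraph (⇑ρ ⁻¹' U ∩ (E - E))).Adj (g (f a)) (g (f b)) := by
      intro a b hab
      have hadj := f.map_rel hab
      simp only [cayleyGraph, SimpleGraph.fromRel_adj] at hadj ⊢
      obtain ⟨hne, hor⟩ := hadj
      refine ⟨hg2 _ ⟨a, rfl⟩ _ ⟨b, rfl⟩ hne, ?_⟩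
      rcases hor with h | h
      · exact Or.inl (hg3 _ ⟨a, rfl⟩ _ ⟨b, rfl⟩ h)
      · exact Or.inr (hg3 _ ⟨b, rfl⟩ _ ⟨a, rfl⟩ h)
    let ψ : H →g cayleyGraph (⇑ρ ⁻¹' U ∩ (E - E)) :=
      ⟨fun a => g (f a), fun {a b} hab => hhom a b hab⟩
    have hle : H.chromaticNumber ≤ (cayleyGraph (⇑ρ ⁻¹' U ∩ (E - E))).chromaticNumber :=
      SimpleGraph.chromaticNumber_le_of_forall_imp fun m ⟨C⟩ => ⟨C.comp ψ⟩
    exact le_trans hk hle
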